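/- Every point x in the convex hull of B(o₁, r₁) ∪ B(o₂, r₂) can be written as x = μo₁ + (1−μ)o₂ + w for some μ ∈ [0,1] and w ∈ ℝⁿ with ‖w‖ ≤ μr₁ + (1−μ)r₂, and conversely every such point lies in the convex hull. -/

import Mathlib

theorem mem_capsule_iff {n : ℕ}
    (o₁ o₂ : EuclideanSpace ℝ (Fin n)) (r₁ r₂ : ℝ)
    (hr₁ : 0 ≤ r₁) (hr₂ : 0 ≤ r₂) (x : EuclideanSpace ℝ (Fin n)) :
    x ∈ convexHull ℝ (Metric.closedBall o₁ r₁ ∪ Metric.closedBall o₂ r₂) ↔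
      ∃ μ : ℝ, μ ∈ Set.Icc (0 : ℝ) 1 ∧
        ∃ w : EuclideanSpace ℝ (Fin n),
          ‖w‖ ≤ μ * r₁ + (1 - μ) * r₂ ∧ x = μ • o₁ + (1 - μ) • o₂ + w := by
  set S : Set (EuclideanSpace ℝ (Fin n)) :=
    {x | ∃ μ : ℝ, μ ∈ Set.Icc (0 : ℝ) 1 ∧
        ∃ w : EuclideanSpace ℝ (Fin n),
          ‖w‖ ≤ μ * r₁ + (1 - μ) * r₂ ∧ x = μ • o₁ + (1 - μ) • o₂ + w} with hS
  constructor
  · intro hx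
    have hconv : Convex ℝ S := by
      rintro p ⟨μ, ⟨hμ0, hμ1⟩, w, hw, rfl⟩ q ⟨ν, ⟨hν0, hν1⟩, v, hv, rfl⟩ a b ha hb hab
      refine ⟨a * μ + b * ν, ⟨by positivity, ?_⟩, a • w + b • v, ?_, ?_⟩
      · nlinarith
      · calc ‖a • w + b • v‖ ≤ a * ‖w‖ + b * ‖v‖ := by
              refine (norm_add_le _ _).trans ?_
              rw [norm_smul, norm_smul, Real.norm_eq_abs, Real.norm_eq_abs,
                abs_of_nonneg ha, abs_of_nonneg hb]
          _ ≤ a * (μ * r₁ + (1 - μ) * r₂) + b * (ν * r₁ + (1 - ν) * r₂) := by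
              gcongr
          _ = (a * μ + b * ν) * r₁ + (1 - (a * μ + b * ν)) * r₂ := by
              nlinarith [hab]
      · have h1 : (1 : ℝ) - (a * μ + b * ν) = a * (1 - μ) + b * (1 - ν) := by
          nlinarith [hab]
        rw [h1]; module
    have hsub : Metric.closedBall o₁ r₁ ∪ Metric.closedBall o₂ r₂ ⊆ S := by
      rintro p (hp | hp)
      · exact ⟨1, ⟨zero_le_one, le_refl 1⟩, p - o₁, by
          simpa [dist_eq_norm] using Metric.mem_closedBall.mp hp, by module⟩
      · exact ⟨0, ⟨le_refl 0, zero_le_one⟩, p - o₂, by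
          simpa [dist_eq_norm] using Metric.mem_closedBall.mp hp, by module⟩
    exact convexHull_min hsub hconv hx
  · rintro ⟨μ, ⟨hμ0, hμ1⟩, w, hw, rfl⟩
    set c : ℝ := μ * r₁ + (1 - μ) * r₂ with hc
    have hc0 : 0 ≤ c := by nlinarith
    rcases eq_or_lt_of_le hc0 with hceq | hcpos
    · have hw0 : w = 0 := by
        have : ‖w‖ ≤ 0 := hw.trans hceq.ge
        simpa using le_antisymm this (norm_nonneg w)
      subst hw0
      have h1 : o₁ ∈ convexHull ℝ (Metric.closedBall o₁ r₁ ∪ Metric.closedBall o₂ r₂) :=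
        subset_convexHull ℝ _ (Or.inl (Metric.mem_closedBall_self hr₁))
      have h2 : o₂ ∈ convexHull ℝ (Metric.closedBall o₁ r₁ ∪ Metric.closedBall o₂ r₂) :=
        subset_convexHull ℝ _ (Or.inr (Metric.mem_closedBall_self hr₂))
      have := (convex_convexHull ℝ _) h1 h2 hμ0 (by linarith : (0:ℝ) ≤ 1 - μ) (by ring)
      simpa using this
    · set w₁ : EuclideanSpace ℝ (Fin n) := (r₁ / c) • w with hw₁
      set w₂ : EuclideanSpace ℝ (Fin n) := (r₂ / c) • w with hw₂
      have hm1 : o₁ + w₁ ∈ Metric.closedBall o₁ r₁ := by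
        rw [Metric.mem_closedBall, dist_eq_norm]
        have : ‖o₁ + w₁ - o₁‖ = ‖w₁‖ := by congr 1; abel
        rw [this, hw₁, norm_smul, Real.norm_eq_abs, abs_of_nonneg (by positivity)]
        rw [div_mul_eq_mul_div, div_le_iff₀ hcpos]
        nlinarith [hw, norm_nonneg w]
      have hm2 : o₂ + w₂ ∈ Metric.closedBall o₂ r₂ := by
        rw [Metric.mem_closedBall, dist_eq_norm]
        have : ‖o₂ + w₂ - o₂‖ = ‖w₂‖ := by congr 1; abel
        rw [this, hw₂, norm_smul, Real.norm_eq_abs, abs_of_nonneg (by positivity)]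
        rw [div_mul_eq_mul_div, div_le_iff₀ hcpos]
        nlinarith [hw, norm_nonneg w]
      have h1 : o₁ + w₁ ∈ convexHull ℝ (Metric.closedBall o₁ r₁ ∪ Metric.closedBall o₂ r₂) :=
        subset_convexHull ℝ _ (Or.inl hm1)
      have h2 : o₂ + w₂ ∈ convexHull ℝ (Metric.closedBall o₁ r₁ ∪ Metric.closedBall o₂ r₂) :=
        subset_convexHull ℝ _ (Or.inr hm2)
      have hx := (convex_convexHull ℝ _) h1 h2 hμ0 (by linarith : (0:ℝ) ≤ 1 - μ) (by ring)
      have heq : μ • (o₁ + w₁) + (1 - μ) • (o₂ + w₂)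
          = μ • o₁ + (1 - μ) • o₂ + w := by
        rw [hw₁, hw₂]
        have hkey : (μ * (r₁ / c) + (1 - μ) * (r₂ / c)) = 1 := by
          field_simp
          exact hc.symm
        have : (μ * (r₁ / c) + (1 - μ) * (r₂ / c)) • w = w := by
          rw [hkey, one_smul]
        calc μ • (o₁ + (r₁ / c) • w) + (1 - μ) • (o₂ + (r₂ / c) • w)
            = μ • o₁ + (1 - μ) • o₂ + (μ * (r₁ / c) + (1 - μ) * (r₂ / c)) • w := by
              module
          _ = μ • o₁ + (1 - μ) • o₂ + w := by rw [this]
      rwa [heq] at hx
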